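/- For every integer n ≥ 2 there exists a constant C_n > 0 such that for every finite set L of lines in ℝ^n, the number of joints of L is at most C_n·|L|^{n/(n-1)}. Here a joint of L is a point p ∈ ℝ^n such that there exist n lines of L, each passing through p, whose direction vectors are linearly independent. -/

import Mathlib

/-- A line in `ℝ^n`: a set of the form `{x + t • v : t ∈ ℝ}` with `v ≠ 0`. -/
def IsLine' {n : ℕ} (l : Set (EuclideanSpace ℝ (Fin n))) : Prop :=
  ∃ (x v : EuclideanSpace ℝ (Fin n)), v ≠ 0 ∧ l = {y | ∃ t : ℝ, y = x + t • v}

/-- A point `p` is a joint of the family `L` of lines if there are `n` lines of `L`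
through `p` whose direction vectors are linearly independent. -/
def IsJoint {n : ℕ} (L : Set (Set (EuclideanSpace ℝ (Fin n))))
    (p : EuclideanSpace ℝ (Fin n)) : Prop :=
  ∃ v : Fin n → EuclideanSpace ℝ (Fin n),
    LinearIndependent ℝ v ∧
    ∀ i : Fin n, {y | ∃ t : ℝ, y = p + t • v i} ∈ L

open MvPolynomial Polynomial Set

variable {n : ℕ}

lemma line_eq_of_mem {x v p q : EuclideanSpace ℝ (Fin n)} (hv : v ≠ 0)
    (hp : p ∈ {y | ∃ t : ℝ, y = x + t • v}) (hq : q ∈ {y | ∃ t : ℝ, y = x + t • v})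
    (hpq : p ≠ q) :
    {y | ∃ t : ℝ, y = x + t • v} = {y | ∃ t : ℝ, y = p + t • (q - p)} := by
  obtain ⟨a, rfl⟩ := hp
  obtain ⟨b, rfl⟩ := hq
  have hab : b - a ≠ 0 := by
    intro h
    apply hpq
    have : a = b := by linarith [sub_eq_zero.mp h]
    rw [this]
  have hqp : (x + b • v) - (x + a • v) = (b - a) • v := by
    rw [sub_smul]; abel
  ext y
  simp only [Set.mem_setOf_eq, hqp]
  constructor
  · rintro ⟨t, rfl⟩
    exact ⟨(t - a) / (b - a), by rw [smul_smul, div_mul_cancel₀ _ hab, sub_smul]; abel⟩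
  · rintro ⟨t, rfl⟩
    exact ⟨a + t * (b - a), by rw [add_smul, mul_smul]; abel⟩

lemma line_inter_subsingleton {l₁ l₂ : Set (EuclideanSpace ℝ (Fin n))}
    (h₁ : IsLine' l₁) (h₂ : IsLine' l₂) (hne : l₁ ≠ l₂) :
    Set.Subsingleton (l₁ ∩ l₂) := by
  rintro p ⟨hp1, hp2⟩ q ⟨hq1, hq2⟩
  by_contra hpq
  obtain ⟨x₁, v₁, hv₁, rfl⟩ := h₁
  obtain ⟨x₂, v₂, hv₂, rfl⟩ := h₂
  exact hne ((line_eq_of_mem hv₁ hp1 hq1 hpq).trans (line_eq_of_mem hv₂ hp2 hq2 hpq).symm)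

lemma not_smul_pair {v : Fin n → EuclideanSpace ℝ (Fin n)} (hv : LinearIndependent ℝ v)
    {i0 i1 : Fin n} (hne : i0 ≠ i1) (t : ℝ) : v i0 ≠ t • v i1 := by
  intro h
  classical
  set g : Fin n → ℝ := fun j => if j = i0 then (1:ℝ) else if j = i1 then -t else 0 with hg
  have hsum : ∑ j, g j • v j = g i0 • v i0 + g i1 • v i1 := by
    rw [← Finset.sum_subset (Finset.subset_univ {i0, i1})]
    · rw [Finset.sum_pair hne]
    · intro j _ hj
      simp only [Finset.mem_insert, Finset.mem_singleton, not_or] at hj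
      simp [hg, hj.1, hj.2]
  have h0 : ∑ j, g j • v j = 0 := by
    rw [hsum]
    simp only [hg, if_pos rfl, if_neg (Ne.symm hne), if_true]
    rw [h]
    module
  have := Fintype.linearIndependent_iff.mp hv g h0 i0
  simp [hg] at this

lemma joint_mem_line (p v : EuclideanSpace ℝ (Fin n)) :
    p ∈ {y | ∃ t : ℝ, y = p + t • v} := ⟨0, by simp⟩

lemma joints_finite (hn : 2 ≤ n) {L : Set (Set (EuclideanSpace ℝ (Fin n)))}
    (hL : L.Finite) (hl : ∀ l ∈ L, IsLine' l) : {p | IsJoint L p}.Finite := by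
  have h01 : (⟨0, by omega⟩ : Fin n) ≠ ⟨1, by omega⟩ := by
    intro h; simpa using congrArg Fin.val h
  apply Set.Finite.subset (s := ⋃ q ∈ (L ×ˢ L) ∩ {q | q.1 ≠ q.2}, q.1 ∩ q.2)
  · apply Set.Finite.biUnion ((hL.prod hL).subset Set.inter_subset_left)
    rintro ⟨l₁, l₂⟩ ⟨⟨h₁, h₂⟩, hne⟩
    exact Set.Subsingleton.finite (line_inter_subsingleton (hl _ h₁) (hl _ h₂) hne)
  · rintro p ⟨v, hv, hmem⟩
    set i0 : Fin n := ⟨0, by omega⟩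
    set i1 : Fin n := ⟨1, by omega⟩
    refine Set.mem_iUnion₂.mpr ⟨({y | ∃ t : ℝ, y = p + t • v i0}, {y | ∃ t : ℝ, y = p + t • v i1}),
      ⟨⟨hmem i0, hmem i1⟩, ?_⟩, joint_mem_line p _, joint_mem_line p _⟩
    intro h
    simp only [Set.ext_iff] at h
    obtain ⟨t, ht⟩ := (h (p + v i0)).mp ⟨1, by simp⟩
    exact not_smul_pair hv h01 t (by have := add_left_cancel ht; simpa using this)

lemma exists_vanishing_poly (S : Finset (Fin n → ℝ)) (m : ℕ) (hm : S.card < m ^ n) :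
    ∃ P : MvPolynomial (Fin n) ℝ, P ≠ 0 ∧ P.totalDegree ≤ n * (m - 1) ∧
      ∀ x ∈ S, MvPolynomial.eval x P = 0 := by
  classical
  set σf : (Fin n → Fin m) → (Fin n →₀ ℕ) :=
    fun a => Finsupp.equivFunOnFinite.symm (fun i => (a i : ℕ)) with hσf
  have hσinj : Function.Injective σf := by
    intro a b hab
    have := Finsupp.equivFunOnFinite.symm.injective hab
    funext i
    exact Fin.val_injective (congrFun this i)
  set ev : ((Fin n → Fin m) → ℝ) →ₗ[ℝ] (S → ℝ) :=
    { toFun := fun c x => ∑ a, c a * ∏ i, (x : Fin n → ℝ) i ^ ((a i : ℕ))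
      map_add' := by
        intro c d; funext x
        simp [add_mul, Finset.sum_add_distrib]
      map_smul' := by
        intro r c; funext x
        simp [Finset.mul_sum, mul_assoc] } with hev
  have hninj : ¬ Function.Injective ev := by
    intro hinj
    have hle := LinearMap.finrank_le_finrank_of_injective hinj
    rw [Module.finrank_pi ℝ, Module.finrank_pi ℝ, Fintype.card_coe, Fintype.card_fun] at hle
    simp only [Fintype.card_fin] at hle
    omega
  rw [Function.not_injective_iff] at hninj
  obtain ⟨c₁, c₂, hc, hcne⟩ := hninj
  set c := c₁ - c₂ with hcdef
  have hc0 : c ≠ 0 := sub_ne_zero.mpr hcne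
  have hevc : ev c = 0 := by rw [hcdef, map_sub, hc, sub_self]
  obtain ⟨a₀, ha₀'⟩ := Function.ne_iff.mp hc0
  have ha₀ : c a₀ ≠ 0 := by simpa using ha₀'
  refine ⟨∑ a : Fin n → Fin m, monomial (σf a) (c a), ?_, ?_, ?_⟩
  · intro hP0
    have : coeff (σf a₀) (∑ a : Fin n → Fin m, monomial (σf a) (c a)) = c a₀ := by
      rw [MvPolynomial.coeff_sum]
      rw [Finset.sum_eq_single_of_mem a₀ (Finset.mem_univ _)]
      · simp [MvPolynomial.coeff_monomial]
      · intro b _ hb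
        rw [MvPolynomial.coeff_monomial, if_neg (fun h => hb (hσinj h))]
    rw [hP0] at this
    simp at this
    exact ha₀ this.symm
  · refine (totalDegree_finset_sum _ _).trans (Finset.sup_le fun a _ => ?_)
    refine (totalDegree_monomial_le _ _).trans ?_
    have : (σf a).sum (fun _ => id) = ∑ i, (a i : ℕ) := by
      rw [hσf]
      exact Finsupp.sum_fintype _ _ (fun i => rfl)
    rw [this]
    calc ∑ i, (a i : ℕ) ≤ ∑ _i : Fin n, (m - 1) :=
          Finset.sum_le_sum (fun i _ => by have := (a i).isLt; omega)
      _ = n * (m - 1) := by simp [Finset.sum_const, mul_comm]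
  · intro x hx
    have := congrFun hevc ⟨x, hx⟩
    simp only [hev, LinearMap.coe_mk, AddHom.coe_mk, Pi.zero_apply] at this
    rw [map_sum]
    rw [← this]
    refine Finset.sum_congr rfl fun a _ => ?_
    rw [MvPolynomial.eval_monomial]
    congr 1
    rw [hσf]
    exact Finsupp.prod_fintype _ _ (fun i => pow_zero _)

noncomputable def lineComp (x v : Fin n → ℝ) :
    MvPolynomial (Fin n) ℝ →ₐ[ℝ] Polynomial ℝ :=
  MvPolynomial.aeval (fun i => Polynomial.C (x i) + Polynomial.C (v i) * Polynomial.X)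

lemma eval_lineComp (x v : Fin n → ℝ) (P : MvPolynomial (Fin n) ℝ) (t : ℝ) :
    (lineComp x v P).eval t = MvPolynomial.eval (fun i => x i + v i * t) P := by
  induction P using MvPolynomial.induction_on with
  | C a => simp [lineComp]
  | add p q hp hq => simp [map_add, hp, hq]
  | mul_X p i hp =>
    rw [map_mul, Polynomial.eval_mul, hp]
    simp [lineComp]

lemma natDegree_lineComp (x v : Fin n → ℝ) (P : MvPolynomial (Fin n) ℝ) :
    (lineComp x v P).natDegree ≤ P.totalDegree := by
  classical
  conv_lhs => rw [P.as_sum]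
  rw [map_sum]
  apply Polynomial.natDegree_sum_le_of_forall_le
  intro s hs
  rw [lineComp, MvPolynomial.aeval_monomial]
  refine (Polynomial.natDegree_mul_le).trans ?_
  have h1 : (algebraMap ℝ (Polynomial ℝ) (MvPolynomial.coeff s P)).natDegree = 0 :=
    Polynomial.natDegree_C _
  rw [h1, zero_add]
  refine le_trans ?_ (MvPolynomial.le_totalDegree hs)
  rw [Finsupp.prod]
  refine (Polynomial.natDegree_prod_le _ _).trans ?_
  rw [Finsupp.sum]
  apply Finset.sum_le_sum
  intro i _
  refine (Polynomial.natDegree_pow_le).trans ?_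
  have : (Polynomial.C (x i) + Polynomial.C (v i) * Polynomial.X).natDegree ≤ 1 := by
    refine (Polynomial.natDegree_add_le _ _).trans ?_
    simp only [Polynomial.natDegree_C, max_le_iff]
    exact ⟨Nat.zero_le _, (Polynomial.natDegree_C_mul_le _ _).trans (by simp)⟩
  calc s i * (Polynomial.C (x i) + Polynomial.C (v i) * Polynomial.X).natDegree
      ≤ s i * 1 := Nat.mul_le_mul_left _ this
    _ = s i := Nat.mul_one _

lemma coeff_zero_lineComp (x v : Fin n → ℝ) (P : MvPolynomial (Fin n) ℝ) :
    (lineComp x v P).coeff 0 = MvPolynomial.eval x P := by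
  rw [Polynomial.coeff_zero_eq_eval_zero, eval_lineComp]
  have h : (fun i => x i + v i * 0) = x := by funext i; simp
  rw [h]

lemma coeff_one_lineComp (x v : Fin n → ℝ) (P : MvPolynomial (Fin n) ℝ) :
    (lineComp x v P).coeff 1 = ∑ j, v j * MvPolynomial.eval x (pderiv j P) := by
  induction P using MvPolynomial.induction_on with
  | C a => simp [lineComp]
  | add p q hp hq => simp [map_add, hp, hq, Polynomial.coeff_add, Finset.sum_add_distrib, mul_add]
  | mul_X p i hp =>
    rw [map_mul]
    have hXi : lineComp x v (MvPolynomial.X i) =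
        Polynomial.C (x i) + Polynomial.C (v i) * Polynomial.X := by
      simp [lineComp]
    rw [hXi, mul_add, Polynomial.coeff_add, Polynomial.coeff_mul_C]
    have hcoeff : (lineComp x v p * (Polynomial.C (v i) * Polynomial.X)).coeff 1
        = (lineComp x v p).coeff 0 * v i := by
      rw [show lineComp x v p * (Polynomial.C (v i) * Polynomial.X)
          = (lineComp x v p * Polynomial.C (v i)) * Polynomial.X by ring,
        Polynomial.coeff_mul_X, Polynomial.coeff_mul_C]
    rw [hcoeff, hp, coeff_zero_lineComp]
    have hR : ∀ j, MvPolynomial.eval x (pderiv j (p * MvPolynomial.X i))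
        = MvPolynomial.eval x (pderiv j p) * x i
          + (if i = j then MvPolynomial.eval x p else 0) := by
      intro j
      classical
      rw [pderiv_mul, MvPolynomial.pderiv_X]
      by_cases h : i = j
      · subst h; simp [Pi.single_eq_same, mul_comm]
      · simp [Pi.single_eq_of_ne (fun hh => h hh.symm), h, mul_comm]
    have hsum : ∑ j, v j * MvPolynomial.eval x (pderiv j (p * MvPolynomial.X i))
        = ∑ j, (v j * (MvPolynomial.eval x (pderiv j p) * x i)
            + if i = j then v j * MvPolynomial.eval x p else 0) := by
      refine Finset.sum_congr rfl fun j _ => ?_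
      rw [hR j, mul_add, mul_ite, mul_zero]
    have h2 : ∑ j, v j * (MvPolynomial.eval x (pderiv j p) * x i)
        = (∑ j, v j * MvPolynomial.eval x (pderiv j p)) * x i := by
      rw [Finset.sum_mul]; exact Finset.sum_congr rfl fun j _ => (mul_assoc _ _ _).symm
    rw [hsum, Finset.sum_add_distrib, h2, Finset.sum_ite_eq, if_pos (Finset.mem_univ i)]
    ring

lemma totalDegree_pderiv_le (j : Fin n) (P : MvPolynomial (Fin n) ℝ) :
    (pderiv j P).totalDegree ≤ P.totalDegree - 1 := by
  classical
  conv_lhs => rw [P.as_sum]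
  rw [map_sum]
  refine (totalDegree_finset_sum _ _).trans (Finset.sup_le fun s hs => ?_)
  rw [pderiv_monomial]
  by_cases hsj : s j = 0
  · simp [hsj]
  · refine (totalDegree_monomial_le _ _).trans ?_
    have hssum : s.sum (fun _ e => e) ≤ P.totalDegree := MvPolynomial.le_totalDegree hs
    set s' : Fin n →₀ ℕ := s - Finsupp.single j 1 with hs'
    have h1 : s'.sum (fun _ => id) = ∑ i, s' i :=
      Finsupp.sum_fintype _ _ (fun i => rfl)
    have h2 : s.sum (fun _ e => e) = ∑ i, s i := Finsupp.sum_fintype _ _ (fun i => rfl)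
    rw [h1]
    rw [h2] at hssum
    have e1 : ∑ i, s' i
        = (s j - 1) + ∑ i ∈ Finset.univ.erase j, s i := by
      rw [← Finset.add_sum_erase _ _ (Finset.mem_univ j)]
      congr 1
      · simp [hs', Finsupp.tsub_apply]
      · refine Finset.sum_congr rfl fun i hi => ?_
        rw [hs', Finsupp.tsub_apply, Finsupp.single_apply,
          if_neg (Ne.symm (Finset.ne_of_mem_erase hi))]
        simp
    have e2 : ∑ i, s i = s j + ∑ i ∈ Finset.univ.erase j, s i := by
      rw [← Finset.add_sum_erase _ _ (Finset.mem_univ j)]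
    omega

lemma exists_pderiv_ne_zero {P : MvPolynomial (Fin n) ℝ} (hd : P.totalDegree ≠ 0) :
    ∃ j, pderiv j P ≠ 0 := by
  classical
  have hne : P.support.Nonempty := by
    rw [Finset.nonempty_iff_ne_empty]
    intro h
    rw [totalDegree, h] at hd
    simp at hd
  obtain ⟨s, hs, hmax⟩ := Finset.exists_mem_eq_sup _ hne (fun s => s.sum fun _ e => e)
  have hssum : s.sum (fun _ e => e) ≠ 0 := by
    rw [totalDegree, hmax] at hd; exact hd
  have hj : ∃ j, s j ≠ 0 := by
    by_contra hall
    push_neg at hall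
    exact hssum (by rw [show s = 0 from Finsupp.ext hall]; simp)
  obtain ⟨j, hsj⟩ := hj
  refine ⟨j, fun h0 => ?_⟩
  have hco : MvPolynomial.coeff (s - Finsupp.single j 1) (pderiv j P)
      = MvPolynomial.coeff s P * (s j : ℝ) := by
    conv_lhs => rw [P.as_sum, map_sum]
    rw [MvPolynomial.coeff_sum]
    rw [Finset.sum_eq_single_of_mem s hs]
    · rw [pderiv_monomial, MvPolynomial.coeff_monomial, if_pos rfl]
    · intro u hu hus
      rw [pderiv_monomial, MvPolynomial.coeff_monomial]
      by_cases huj : u j = 0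
      · simp [huj]
      · rw [if_neg]
        intro heq
        apply hus
        refine Finsupp.ext fun i => ?_
        have hi := DFunLike.congr_fun heq i
        rw [Finsupp.tsub_apply, Finsupp.tsub_apply, Finsupp.single_apply] at hi
        by_cases hij : i = j
        · subst hij
          simp only [eq_self_iff_true, if_true] at hi
          omega
        · simp only [if_neg (show ¬ j = i from fun h => hij h.symm)] at hi
          omega
  rw [h0] at hco
  simp only [MvPolynomial.coeff_zero] at hco
  have hc : MvPolynomial.coeff s P ≠ 0 := MvPolynomial.mem_support_iff.mp hs
  have : (s j : ℝ) ≠ 0 := Nat.cast_ne_zero.mpr hsj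
  exact this (by
    rcases mul_eq_zero.mp hco.symm with h | h
    · exact absurd h hc
    · exact h)

lemma coords_zero_of_indep (hn : 0 < n) {v : Fin n → EuclideanSpace ℝ (Fin n)}
    (hv : LinearIndependent ℝ v) (c : Fin n → ℝ)
    (h : ∀ i, ∑ j, v i j * c j = 0) : ∀ j, c j = 0 := by
  set φ : EuclideanSpace ℝ (Fin n) →ₗ[ℝ] ℝ :=
    { toFun := fun w => ∑ j, w j * c j
      map_add' := by
        intro w w'
        simp [PiLp.add_apply, add_mul, Finset.sum_add_distrib]
      map_smul' := by
        intro r w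
        simp [PiLp.smul_apply, smul_eq_mul, Finset.mul_sum, mul_assoc] } with hφ
  haveI : Nonempty (Fin n) := ⟨⟨0, hn⟩⟩
  have hspan : Submodule.span ℝ (Set.range v) = ⊤ :=
    LinearIndependent.span_eq_top_of_card_eq_finrank hv
      (by simp [finrank_euclideanSpace])
  have hker : (⊤ : Submodule ℝ (EuclideanSpace ℝ (Fin n))) ≤ LinearMap.ker φ := by
    rw [← hspan]
    refine Submodule.span_le.mpr ?_
    rintro _ ⟨i, rfl⟩
    exact h i
  intro j
  have := hker (Submodule.mem_top (x := EuclideanSpace.single j 1))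
  rw [LinearMap.mem_ker] at this
  rw [hφ] at this
  simp only [LinearMap.coe_mk, AddHom.coe_mk] at this
  rw [← this]
  rw [Finset.sum_eq_single_of_mem j (Finset.mem_univ j)]
  · simp [EuclideanSpace.single_apply]
  · intro k _ hk
    simp [EuclideanSpace.single_apply, hk]

lemma lineComp_eq_zero {x v : EuclideanSpace ℝ (Fin n)} {P : MvPolynomial (Fin n) ℝ}
    {J : Set (EuclideanSpace ℝ (Fin n))} (hJf : J.Finite)
    (hvan : ∀ p ∈ J, MvPolynomial.eval (fun i => p i) P = 0) (hv : v ≠ 0)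
    (hcard : P.totalDegree < (J ∩ {y | ∃ t : ℝ, y = x + t • v}).ncard) :
    lineComp (fun i => x i) (fun i => v i) P = 0 := by
  classical
  set K := J ∩ {y | ∃ t : ℝ, y = x + t • v} with hK
  have hKf : K.Finite := hJf.inter_of_left _
  set f : hKf.toFinset → ℝ := fun q =>
    Classical.choose ((hKf.mem_toFinset.mp q.2).2 : ∃ t : ℝ, (q : _) = x + t • v) with hf
  have hfq : ∀ q : hKf.toFinset, (q : EuclideanSpace ℝ (Fin n)) = x + f q • v :=
    fun q => Classical.choose_spec ((hKf.mem_toFinset.mp q.2).2)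
  have hfinj : Function.Injective f := by
    intro q₁ q₂ hq
    have := (hfq q₁).trans (by rw [hq, ← hfq q₂])
    exact Subtype.ext this
  refine Polynomial.eq_zero_of_natDegree_lt_card_of_eval_eq_zero _ hfinj ?_ ?_
  · intro q
    rw [eval_lineComp]
    have hq : (fun i => x i + v i * f q) = fun i => (q : EuclideanSpace ℝ (Fin n)) i := by
      funext i
      rw [hfq q]
      simp [PiLp.add_apply, PiLp.smul_apply, mul_comm]
    rw [hq]
    exact hvan _ (hKf.mem_toFinset.mp q.2).1
  · calc (lineComp (fun i => x i) (fun i => v i) P).natDegree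
        ≤ P.totalDegree := natDegree_lineComp _ _ _
      _ < K.ncard := hcard
      _ = hKf.toFinset.card := Set.ncard_eq_toFinset_card _ hKf
      _ = Fintype.card hKf.toFinset := (Fintype.card_coe _).symm

lemma exists_vanishing_poly' (S : Finset (EuclideanSpace ℝ (Fin n))) (m : ℕ)
    (hm : S.card < m ^ n) :
    ∃ P : MvPolynomial (Fin n) ℝ, P ≠ 0 ∧ P.totalDegree ≤ n * (m - 1) ∧
      ∀ x ∈ S, MvPolynomial.eval (fun i => x i) P = 0 := by
  classical
  obtain ⟨P, h1, h2, h3⟩ := exists_vanishing_poly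
    (S.image (fun (x : EuclideanSpace ℝ (Fin n)) (i : Fin n) => x i)) m
    (lt_of_le_of_lt (Finset.card_image_le) hm)
  exact ⟨P, h1, h2, fun x hx => h3 _ (Finset.mem_image_of_mem _ hx)⟩

lemma eq_C_of_totalDegree_eq_zero' {Q : MvPolynomial (Fin n) ℝ} (h : Q.totalDegree = 0) :
    Q = MvPolynomial.C (MvPolynomial.coeff 0 Q) := by
  ext m
  rw [MvPolynomial.coeff_C]
  by_cases hm : 0 = m
  · rw [← hm, if_pos rfl]
  · rw [if_neg hm]
    by_contra hc
    have hms : m ∈ Q.support := MvPolynomial.mem_support_iff.mpr hc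
    have := (MvPolynomial.totalDegree_eq_zero_iff _ Q).mp h m hms
    exact hm (Eq.symm (Finsupp.ext this))

lemma exists_low_line (hn : 2 ≤ n) {L : Set (Set (EuclideanSpace ℝ (Fin n)))}
    (hL : L.Finite) (hl : ∀ l ∈ L, IsLine' l) (m : ℕ)
    (hJm : {p | IsJoint L p}.ncard < m ^ n)
    (hJne : {p | IsJoint L p}.Nonempty) :
    ∃ l ∈ L, ({p | IsJoint L p} ∩ l).ncard ≤ n * (m - 1) := by
  classical
  set J := {p | IsJoint L p} with hJ
  have hJf : J.Finite := joints_finite hn hL hl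
  have hcard : hJf.toFinset.card < m ^ n := by
    rwa [← Set.ncard_eq_toFinset_card _ hJf]
  obtain ⟨P, hP0, hPd, hPv⟩ := exists_vanishing_poly' hJf.toFinset m hcard
  -- minimal degree nonzero vanishing polynomial
  set pred : ℕ → Prop := fun k => ∃ Q : MvPolynomial (Fin n) ℝ, Q ≠ 0 ∧
    Q.totalDegree = k ∧ ∀ p ∈ J, MvPolynomial.eval (fun i => p i) Q = 0 with hpred
  have hex : ∃ k, pred k :=
    ⟨P.totalDegree, P, hP0, rfl, fun p hp => hPv p (hJf.mem_toFinset.mpr hp)⟩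
  obtain ⟨Q, hQ0, hQd, hQv⟩ := Nat.find_spec hex
  have hmin : ∀ k < Nat.find hex, ¬ pred k := fun k hk => Nat.find_min hex hk
  by_contra hcon
  push_neg at hcon
  -- every line of L contains more than Q.totalDegree joints
  have hline : ∀ l ∈ L, Q.totalDegree < (J ∩ l).ncard := by
    intro l hlL
    have h1 : n * (m - 1) < (J ∩ l).ncard := hcon l hlL
    have h2 : Q.totalDegree ≤ P.totalDegree := by
      rw [hQd]
      exact Nat.find_le ⟨P, hP0, rfl, fun p hp => hPv p (hJf.mem_toFinset.mpr hp)⟩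
    omega
  -- all partial derivatives of Q vanish at every joint
  have hpz : ∀ p ∈ J, ∀ j, MvPolynomial.eval (fun i => p i) (pderiv j Q) = 0 := by
    intro p hp
    obtain ⟨v, hv, hmem⟩ := hp
    refine coords_zero_of_indep (by omega) hv _ (fun i => ?_)
    have hvi : v i ≠ 0 := hv.ne_zero i
    have hz : lineComp (fun k => p k) (fun k => v i k) Q = 0 :=
      lineComp_eq_zero hJf hQv hvi (hline _ (hmem i))
    have := coeff_one_lineComp (fun k => p k) (fun k => v i k) Q
    rw [hz] at this
    simpa using this.symm
  -- contradiction via minimality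
  obtain ⟨p₀, hp₀⟩ := hJne
  by_cases hd0 : Q.totalDegree = 0
  · apply hQ0
    have hC := eq_C_of_totalDegree_eq_zero' hd0
    have := hQv p₀ hp₀
    rw [hC] at this ⊢
    simp only [MvPolynomial.eval_C] at this
    rw [this, map_zero]
  · obtain ⟨j, hj⟩ := exists_pderiv_ne_zero hd0
    refine hmin (pderiv j Q).totalDegree ?_ ⟨pderiv j Q, hj, rfl, fun p hp => hpz p hp j⟩
    have h1 := totalDegree_pderiv_le j Q
    rw [← hQd]
    omega

lemma choose_m (hn : 2 ≤ n) (N : ℕ) :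
    ∃ m : ℕ, N < m ^ n ∧ ((n * (m - 1) : ℕ) : ℝ) ≤ n * (N:ℝ) ^ (1/(n:ℝ)) := by
  have hnn : n ≠ 0 := by omega
  set x := (N:ℝ) ^ (1/(n:ℝ)) with hx
  have hx0 : 0 ≤ x := Real.rpow_nonneg (Nat.cast_nonneg N) _
  refine ⟨Nat.floor x + 1, ?_, ?_⟩
  · have hlt : x < ((Nat.floor x + 1 : ℕ):ℝ) := by
      push_cast
      exact Nat.lt_floor_add_one x
    have hN : (N:ℝ) = x ^ (n:ℕ) := by
      rw [hx, ← Real.rpow_natCast (x) n, ← Real.rpow_mul (Nat.cast_nonneg N), one_div,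
        inv_mul_cancel₀ (by exact_mod_cast hnn), Real.rpow_one]
    have hpow : (N:ℝ) < ((Nat.floor x + 1 : ℕ):ℝ) ^ n := by
      rw [hN]
      exact pow_lt_pow_left₀ hlt hx0 hnn
    exact_mod_cast hpow
  · simp only [Nat.add_sub_cancel]
    push_cast
    exact mul_le_mul_of_nonneg_left (Nat.floor_le hx0) (Nat.cast_nonneg n)


lemma joints_count (hn : 2 ≤ n) :
    ∀ N : ℕ, ∀ L : Set (Set (EuclideanSpace ℝ (Fin n))), L.Finite →
      (∀ l ∈ L, IsLine' l) → L.ncard = N →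
      ({p | IsJoint L p}.ncard : ℝ) ≤
        n * ({p | IsJoint L p}.ncard : ℝ) ^ (1/(n:ℝ)) * L.ncard := by
  intro N
  induction N using Nat.strong_induction_on with
  | _ N IH =>
    intro L hLf hl hN
    set J := {p | IsJoint L p} with hJdef
    have hJf : J.Finite := joints_finite hn hLf hl
    by_cases hJ0 : J.ncard = 0
    · rw [hJ0]
      push_cast
      positivity
    · have hJne : J.Nonempty := Set.nonempty_of_ncard_ne_zero hJ0
      obtain ⟨m, hm1, hm2⟩ := choose_m hn J.ncard
      obtain ⟨l, hlL, hll⟩ := exists_low_line hn hLf hl m hm1 hJne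
      set L' := L \ {l} with hL'
      have hL'f : L'.Finite := hLf.diff
      have hl' : ∀ k ∈ L', IsLine' k := fun k hk => hl k hk.1
      have hL'card : L'.ncard = N - 1 := by
        rw [hL', Set.ncard_diff_singleton_of_mem hlL, hN]
      have hN1 : 1 ≤ N := by
        rw [← hN]
        have : L.ncard ≠ 0 := by
          intro h0
          have := (Set.ncard_eq_zero hLf).mp h0
          rw [this] at hlL
          exact hlL
        omega
      set J' := {p | IsJoint L' p} with hJ'def
      have hJ'f : J'.Finite := joints_finite hn hL'f hl'
      have hJ'sub : J' ⊆ J := by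
        intro p ⟨v, hv, hmem⟩
        exact ⟨v, hv, fun i => (hmem i).1⟩
      have hsub : J ⊆ J' ∪ (J ∩ l) := by
        intro p hp
        by_cases hpl : p ∈ l
        · exact Or.inr ⟨hp, hpl⟩
        · left
          obtain ⟨v, hv, hmem⟩ := hp
          refine ⟨v, hv, fun i => ⟨hmem i, ?_⟩⟩
          intro heq
          rw [Set.mem_singleton_iff] at heq
          apply hpl
          rw [← heq]
          exact joint_mem_line p (v i)
      have hcount : (J.ncard : ℝ) ≤ (J'.ncard : ℝ) + ((J ∩ l).ncard : ℝ) := by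
        have h1 : J.ncard ≤ (J' ∪ (J ∩ l)).ncard :=
          Set.ncard_le_ncard hsub (hJ'f.union (hJf.inter_of_left _))
        have h2 : (J' ∪ (J ∩ l)).ncard ≤ J'.ncard + (J ∩ l).ncard :=
          Set.ncard_union_le _ _
        exact_mod_cast h1.trans h2
      have hmono : ((J'.ncard : ℝ)) ^ (1/(n:ℝ)) ≤ ((J.ncard : ℝ)) ^ (1/(n:ℝ)) := by
        apply Real.rpow_le_rpow (Nat.cast_nonneg _) _ (by positivity)
        exact_mod_cast Set.ncard_le_ncard hJ'sub hJf
      have hIH : (J'.ncard : ℝ) ≤ n * (J'.ncard : ℝ) ^ (1/(n:ℝ)) * L'.ncard :=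
        IH (N - 1) (by omega) L' hL'f hl' hL'card
      have hJl : ((J ∩ l).ncard : ℝ) ≤ n * (J.ncard : ℝ) ^ (1/(n:ℝ)) := by
        refine le_trans ?_ hm2
        exact_mod_cast hll
      have hLn : (L'.ncard : ℝ) + 1 = (L.ncard : ℝ) := by
        rw [hL'card, hN]
        push_cast [Nat.cast_sub hN1]
        ring
      calc (J.ncard : ℝ) ≤ (J'.ncard : ℝ) + ((J ∩ l).ncard : ℝ) := hcount
        _ ≤ n * (J'.ncard : ℝ) ^ (1/(n:ℝ)) * L'.ncard
            + n * (J.ncard : ℝ) ^ (1/(n:ℝ)) := by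
              exact add_le_add hIH hJl
        _ ≤ n * (J.ncard : ℝ) ^ (1/(n:ℝ)) * L'.ncard
            + n * (J.ncard : ℝ) ^ (1/(n:ℝ)) := by
              gcongr
        _ = n * (J.ncard : ℝ) ^ (1/(n:ℝ)) * ((L'.ncard : ℝ) + 1) := by ring
        _ = n * (J.ncard : ℝ) ^ (1/(n:ℝ)) * L.ncard := by rw [hLn]

/-- The joints theorem: a finite set `L` of lines in `ℝ^n` determines at most
`C_n · |L|^{n/(n-1)}` joints. -/
theorem joints_theorem (n : ℕ) (hn : 2 ≤ n) :
    ∃ C : ℝ, 0 < C ∧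
      ∀ L : Set (Set (EuclideanSpace ℝ (Fin n))), L.Finite →
        (∀ l ∈ L, IsLine' l) →
        ({p | IsJoint L p}.ncard : ℝ) ≤ C * (L.ncard : ℝ) ^ ((n : ℝ) / ((n : ℝ) - 1)) := by
  have ha : (2:ℝ) ≤ (n:ℝ) := by exact_mod_cast hn
  have ha0 : (0:ℝ) < (n:ℝ) := by linarith
  have ha1 : (0:ℝ) < (n:ℝ) - 1 := by linarith
  refine ⟨(n:ℝ)^(2:ℕ), by positivity, ?_⟩
  intro L hLf hl
  set q : ℝ := (n:ℝ)/((n:ℝ)-1) with hq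
  set Jc : ℝ := ({p | IsJoint L p}.ncard : ℝ) with hJc
  set Lc : ℝ := (L.ncard : ℝ) with hLc
  have hq0 : 0 ≤ q := le_of_lt (div_pos ha0 ha1)
  have hq2 : q ≤ 2 := by
    rw [hq, div_le_iff₀ ha1]
    linarith
  have key : Jc ≤ n * Jc ^ (1/(n:ℝ)) * Lc := joints_count hn L.ncard L hLf hl rfl
  by_cases hJ0 : {p | IsJoint L p}.ncard = 0
  · rw [hJc, hJ0]
    push_cast
    positivity
  · have hJpos : (0:ℝ) < Jc := by
      rw [hJc]
      exact_mod_cast Nat.pos_of_ne_zero hJ0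
    have he : Jc ^ (1 - 1/(n:ℝ)) ≤ n * Lc := by
      have hsplit : Jc = Jc ^ (1 - 1/(n:ℝ)) * Jc ^ (1/(n:ℝ)) := by
        rw [← Real.rpow_add hJpos]
        norm_num
      have hkey' : Jc ^ (1 - 1/(n:ℝ)) * Jc ^ (1/(n:ℝ)) ≤ (n * Lc) * Jc ^ (1/(n:ℝ)) := by
        rw [← hsplit]
        calc Jc ≤ n * Jc ^ (1/(n:ℝ)) * Lc := key
          _ = (n * Lc) * Jc ^ (1/(n:ℝ)) := by ring
      exact le_of_mul_le_mul_right hkey' (Real.rpow_pos_of_pos hJpos _)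
    have hq1 : (1 - 1/(n:ℝ)) * q = 1 := by
      rw [hq]
      field_simp
    have hLc0 : 0 ≤ Lc := by rw [hLc]; exact Nat.cast_nonneg _
    calc Jc = (Jc ^ (1 - 1/(n:ℝ))) ^ q := by
          rw [← Real.rpow_mul hJpos.le, hq1, Real.rpow_one]
      _ ≤ (n * Lc) ^ q := Real.rpow_le_rpow (Real.rpow_nonneg hJpos.le _) he hq0
      _ = (n:ℝ) ^ q * Lc ^ q := Real.mul_rpow ha0.le hLc0
      _ ≤ (n:ℝ) ^ (2:ℝ) * Lc ^ q :=
          mul_le_mul_of_nonneg_right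
            (Real.rpow_le_rpow_of_exponent_le (by linarith) hq2)
            (Real.rpow_nonneg hLc0 _)
      _ = (n:ℝ)^(2:ℕ) * Lc ^ q := by
          rw [show ((2:ℝ)) = ((2:ℕ):ℝ) by norm_num, Real.rpow_natCast]
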